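/- With notation as in the context, the set I' = { (w₁,…,w_s, a₁,…,a_s, μ) : w_i ∈ im(c_i − id) + im(f_i − id) for i = 1,…,s, a_i ∈ Z/(l_i), μ ∈ Z/(p) } is an ideal of the left brace B = T ⋊∘ Z/(p). -/

import Mathlib

/-- `(Z/(p))^n`. -/
abbrev BraceVec (p n : ℕ) := Fin n → ZMod p

/-- The underlying set of the semidirect product `T = (Z/(p))^n ⋊ A`, where
`n = n₁ + ⋯ + n_s`, `(Z/(p))^n = ∏ i, (Z/(p))^{n_i}` and `A = ∏ i, Z/(l i)`;
its addition is the componentwise one. -/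
abbrev BraceT (p s : ℕ) (l nn : Fin s → ℕ) : Type :=
  ((i : Fin s) → BraceVec p (nn i)) × ((i : Fin s) → ZMod (l i))

/-- Multiplication of `T = (Z/(p))^n ⋊ A` via `β_{(a₁,…,a_s)} = (c₁^{a₁},…,c_s^{a_s})`. -/
def braceTmul {p s : ℕ} {l nn : Fin s → ℕ}
    (c : ∀ i : Fin s, AddAut (BraceVec p (nn i)))
    (x y : BraceT p s l nn) : BraceT p s l nn :=
  (fun i => x.1 i + ((x.2 i).val • c i) (y.1 i), x.2 + y.2)

/-- `α_μ(u₁,…,u_s,a₁,…,a_s) = (f₁^μ(u₁),…,f_s^μ(u_s), γ₁^μ·a₁,…, γ_s^μ·a_s)`. -/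
def braceAlpha {p s : ℕ} {l nn : Fin s → ℕ}
    (f : ∀ i : Fin s, AddAut (BraceVec p (nn i)))
    (γ : ∀ i : Fin s, (ZMod (l i))ˣ)
    (μ : ZMod p) (x : BraceT p s l nn) : BraceT p s l nn :=
  (fun i => (μ.val • f i) (x.1 i), fun i => ((γ i : ZMod (l i)) ^ μ.val) * x.2 i)

/-- The underlying set of the asymmetric product `B = T ⋊∘ Z/(p)`. -/
abbrev BraceB (p s : ℕ) (l nn : Fin s → ℕ) : Type := BraceT p s l nn × ZMod p

/-- The symmetric bilinear form `b((u,a),(v,a')) = Σ_{i} b_i(u_i,v_i)` on `T`. -/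
def braceBil {p s : ℕ} {l nn : Fin s → ℕ}
    (bi : ∀ i : Fin s, BraceVec p (nn i) → BraceVec p (nn i) → ZMod p)
    (x y : BraceT p s l nn) : ZMod p :=
  ∑ i : Fin s, bi i (x.1 i) (y.1 i)

/-- Addition of the asymmetric product `B = T ⋊∘ Z/(p)`. -/
def braceBadd {p s : ℕ} {l nn : Fin s → ℕ}
    (bi : ∀ i : Fin s, BraceVec p (nn i) → BraceVec p (nn i) → ZMod p)
    (x y : BraceB p s l nn) : BraceB p s l nn :=
  (x.1 + y.1, x.2 + y.2 + braceBil bi x.1 y.1)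

/-- Additive inverse in the asymmetric product `B = T ⋊∘ Z/(p)`. -/
def braceBneg {p s : ℕ} {l nn : Fin s → ℕ}
    (bi : ∀ i : Fin s, BraceVec p (nn i) → BraceVec p (nn i) → ZMod p)
    (x : BraceB p s l nn) : BraceB p s l nn :=
  (-x.1, -x.2 - braceBil bi x.1 (-x.1))

/-- Multiplication of the asymmetric product `B = T ⋊∘ Z/(p)`. -/
def braceBmul {p s : ℕ} {l nn : Fin s → ℕ}
    (c f : ∀ i : Fin s, AddAut (BraceVec p (nn i)))
    (γ : ∀ i : Fin s, (ZMod (l i))ˣ)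
    (x y : BraceB p s l nn) : BraceB p s l nn :=
  (braceTmul c x.1 (braceAlpha f γ x.2 y.1), x.2 + y.2)

/-- An ideal of the left brace `B = T ⋊∘ Z/(p)`: a normal subgroup of `(B,·)` closed
under all the lambda maps `λ_a(x) = a·x − a`.  (Closure under multiplicative inverses
and conjugation is phrased via the defining equation of the inverse.) -/
def IsIdealBraceB {p s : ℕ} {l nn : Fin s → ℕ}
    (bi : ∀ i : Fin s, BraceVec p (nn i) → BraceVec p (nn i) → ZMod p)
    (c f : ∀ i : Fin s, AddAut (BraceVec p (nn i)))
    (γ : ∀ i : Fin s, (ZMod (l i))ˣ)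
    (N : Set (BraceB p s l nn)) : Prop :=
  ((0 : BraceT p s l nn), (0 : ZMod p)) ∈ N ∧
  (∀ x ∈ N, ∀ y ∈ N, braceBmul c f γ x y ∈ N) ∧
  (∀ x ∈ N, ∀ y : BraceB p s l nn,
      braceBmul c f γ x y = ((0 : BraceT p s l nn), (0 : ZMod p)) → y ∈ N) ∧
  (∀ g : BraceB p s l nn, ∀ x ∈ N, ∀ g' : BraceB p s l nn,
      braceBmul c f γ g g' = ((0 : BraceT p s l nn), (0 : ZMod p)) →
      braceBmul c f γ (braceBmul c f γ g x) g' ∈ N) ∧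
  (∀ a : BraceB p s l nn, ∀ x ∈ N,
      braceBadd bi (braceBmul c f γ a x) (braceBneg bi a) ∈ N)


section IdealHelpers

variable {G : Type*} [AddCommGroup G]

private lemma tele_pow (g : AddAut G) (k : ℕ) (w : G) :
    ∃ u, (k • g) w - w = g u - u := by
  induction k with
  | zero => exact ⟨0, by simp⟩
  | succ k ih =>
    obtain ⟨u, hu⟩ := ih
    refine ⟨(k • g) w + u, ?_⟩
    have hg : g u = (k • g) w - w + u := eq_add_of_sub_eq hu.symm
    rw [succ_nsmul', AddAut.add_apply, map_add, hg]
    abel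

/-- Membership in `im(C - id) + im(F - id)`. -/
private def memW (C F : AddAut G) (w : G) : Prop :=
  ∃ u v, w = (C u - u) + (F v - v)

private lemma memW_add {C F : AddAut G} {w w' : G} (h : memW C F w) (h' : memW C F w') :
    memW C F (w + w') := by
  obtain ⟨u, v, rfl⟩ := h
  obtain ⟨u', v', rfl⟩ := h'
  exact ⟨u + u', v + v', by rw [map_add, map_add]; abel⟩

private lemma memW_neg {C F : AddAut G} {w : G} (h : memW C F w) : memW C F (-w) := by
  obtain ⟨u, v, rfl⟩ := h
  exact ⟨-u, -v, by rw [map_neg, map_neg]; abel⟩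

private lemma memW_Cpow_sub (C F : AddAut G) (k : ℕ) (w : G) :
    memW C F ((k • C) w - w) := by
  obtain ⟨u, hu⟩ := tele_pow C k w
  exact ⟨u, 0, by rw [hu]; simp⟩

private lemma memW_Fpow_sub (C F : AddAut G) (k : ℕ) (w : G) :
    memW C F ((k • F) w - w) := by
  obtain ⟨u, hu⟩ := tele_pow F k w
  exact ⟨0, u, by rw [hu]; simp⟩

private lemma memW_Cpow {C F : AddAut G} (k : ℕ) {w : G} (h : memW C F w) :
    memW C F ((k • C) w) := by
  have h2 : (k • C) w = ((k • C) w - w) + w := by abel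
  rw [h2]; exact memW_add (memW_Cpow_sub C F k w) h

private lemma memW_Fpow {C F : AddAut G} (k : ℕ) {w : G} (h : memW C F w) :
    memW C F ((k • F) w) := by
  have h2 : (k • F) w = ((k • F) w - w) + w := by abel
  rw [h2]; exact memW_add (memW_Fpow_sub C F k w) h

private lemma memW_of_Cpow {C F : AddAut G} {k : ℕ} {w : G} (h : memW C F ((k • C) w)) :
    memW C F w := by
  have h2 : w = (k • C) w + (-((k • C) w - w)) := by abel
  rw [h2]; exact memW_add h (memW_neg (memW_Cpow_sub C F k w))

private lemma memW_of_Fpow {C F : AddAut G} {k : ℕ} {w : G} (h : memW C F ((k • F) w)) :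
    memW C F w := by
  have h2 : w = (k • F) w + (-((k • F) w - w)) := by abel
  rw [h2]; exact memW_add h (memW_neg (memW_Fpow_sub C F k w))

private lemma memW_diff (C F : AddAut G) (k m a b : ℕ) (z : G) :
    memW C F ((k • C) ((m • F) z) - (a • C) ((b • F) z)) := by
  have h1 := memW_Cpow_sub C F k ((m • F) z)
  have h2 := memW_Fpow_sub C F m z
  have h3 := memW_Cpow_sub C F a ((b • F) z)
  have h4 := memW_Fpow_sub C F b z
  have h := memW_add (memW_add h1 h2) (memW_neg (memW_add h3 h4))
  have he : (k • C) ((m • F) z) - (a • C) ((b • F) z) =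
      ((k • C) ((m • F) z) - (m • F) z + ((m • F) z - z)) +
      (-(((a • C) ((b • F) z) - (b • F) z) + ((b • F) z - z))) := by abel
  rw [he]; exact h

private lemma memW_conj (C F : AddAut G) (a b k m : ℕ) (gi xi z : G)
    (hg : gi + (a • C) ((b • F) z) = 0) (hx : memW C F xi) :
    memW C F (gi + (a • C) ((b • F) xi) + (k • C) ((m • F) z)) := by
  have hg2 : gi = -((a • C) ((b • F) z)) := eq_neg_of_add_eq_zero_left hg
  have he : gi + (a • C) ((b • F) xi) + (k • C) ((m • F) z) =
      (a • C) ((b • F) xi) + ((k • C) ((m • F) z) - (a • C) ((b • F) z)) := by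
    rw [hg2]; abel
  rw [he]
  exact memW_add (memW_Cpow a (memW_Fpow b hx)) (memW_diff C F k m a b z)

end IdealHelpers

/-- the set
`I' = {(w,a,μ) : w_i ∈ im(c_i − id) + im(f_i − id)}` is an ideal of the left brace
`B = T ⋊∘ Z/(p)`. -/
theorem braceB_ideal
    (p s : ℕ) (l nn : Fin s → ℕ)
    (c f : ∀ i : Fin s, AddAut (BraceVec p (nn i)))
    (γ : ∀ i : Fin s, (ZMod (l i))ˣ)
    (bi : ∀ i : Fin s, BraceVec p (nn i) → BraceVec p (nn i) → ZMod p)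
    (hp : p.Prime) (hl : ∀ i, 1 < l i)
    (hdiv : ∀ q : ℕ, q.Prime → q ∣ ∏ i, l i → p ∣ q - 1)
    (hfo : ∀ i, addOrderOf (f i) = p)
    (hco : ∀ i, addOrderOf (c i) = l i)
    (hγo : ∀ i, orderOf (γ i) = p)
    (hcomm : ∀ i, f i + c i = ((γ i : ZMod (l i)).val) • c i + f i)
    (hγ1 : ∀ i, IsUnit ((γ i : ZMod (l i)) - 1))
    (hbsymm : ∀ i, ∀ u v : BraceVec p (nn i), bi i u v = bi i v u)
    (hbadd : ∀ i, ∀ u u' v : BraceVec p (nn i), bi i (u + u') v = bi i u v + bi i u' v)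
    (hbnd : ∀ i, ∀ u : BraceVec p (nn i), (∀ v, bi i u v = 0) → u = 0)
    (hbc : ∀ i, ∀ u v : BraceVec p (nn i), bi i (c i u) (c i v) = bi i u v)
    (hbf : ∀ i, ∀ u v : BraceVec p (nn i), bi i (f i u) (f i v) = bi i u v) :
    IsIdealBraceB bi c f γ
      {x : BraceB p s l nn | ∀ i : Fin s, ∃ u v : BraceVec p (nn i),
        x.1.1 i = ((c i) u - u) + ((f i) v - v)} := by
  refine ⟨?_, ?_, ?_, ?_, ?_⟩
  · intro i
    exact ⟨0, 0, by simp⟩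
  · intro x hx y hy i
    show memW (c i) (f i) _
    simp only [braceBmul, braceTmul, braceAlpha]
    exact memW_add (hx i) (memW_Cpow _ (memW_Fpow _ (hy i)))
  · intro x hx y hEq i
    have h := congrFun (congrArg (fun z : BraceB p s l nn => z.1.1) hEq) i
    simp only [braceBmul, braceTmul, braceAlpha, Prod.fst_zero, Pi.zero_apply] at h
    have h2 : ((x.1.2 i).val • c i) ((x.2.val • f i) (y.1.1 i)) = -(x.1.1 i) :=
      eq_neg_of_add_eq_zero_right h
    have h3 : memW (c i) (f i) (((x.1.2 i).val • c i) ((x.2.val • f i) (y.1.1 i))) := by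
      rw [h2]; exact memW_neg (hx i)
    exact memW_of_Fpow (memW_of_Cpow h3)
  · intro g x hx g' hEq i
    have h := congrFun (congrArg (fun z : BraceB p s l nn => z.1.1) hEq) i
    simp only [braceBmul, braceTmul, braceAlpha, Prod.fst_zero, Pi.zero_apply] at h
    show memW (c i) (f i) _
    simp only [braceBmul, braceTmul, braceAlpha]
    exact memW_conj (c i) (f i) _ _ _ _ _ _ _ h (hx i)
  · intro a x hx i
    show memW (c i) (f i) _
    simp only [braceBadd, braceBmul, braceBneg, braceTmul, braceAlpha, Prod.fst_add,
      Prod.fst_neg, Pi.add_apply, Pi.neg_apply]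
    have he : a.1.1 i + ((a.1.2 i).val • c i) ((a.2.val • f i) (x.1.1 i)) + -(a.1.1 i) =
        ((a.1.2 i).val • c i) ((a.2.val • f i) (x.1.1 i)) := by abel
    rw [he]
    exact memW_Cpow _ (memW_Fpow _ (hx i))
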